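/- Fix a discretization as in the context, fix q̂ ∈ {0,…,N_φ−1}, and let g_{q̂}(φ,s) = (1/|Φ_{q̂}|) if φ ∈ Φ_{q̂} and s ∈ (−1,1), and g_{q̂}(φ,s) = 0 otherwise. Then (R* g_{q̂})(x) = 1 for all x ∈ Ω, and for every i,j ∈ {0,…,N_x−1} with |x_ij·θ_{φ_{q̂}}| ≤ 1 − δ_s/2 and every x in the interior of X_ij, the pixel-driven backprojection is exact: (R^pd* g_{q̂})(x) = 1. -/

import Mathlib

open MeasureTheory Real Set Filter

/-- The ray-driven weight function `w^rd(φ, t)` (for spatial resolution `δx`).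
Here `κ(φ) = min{1/|cos φ|, 1/|sin φ|}` (with `1/0 = ∞`) is expressed as
`1 / max |cos φ| |sin φ|`, which is the same real number. -/
noncomputable def rayWeight (δx φ t : ℝ) : ℝ :=
  (1 / δx) *
    (if δx / 2 * |(|Real.cos φ| - |Real.sin φ|)| ≤ |t| ∧
        |t| < δx / 2 * (|Real.cos φ| + |Real.sin φ|) then
      (δx / 2 * (|Real.cos φ| + |Real.sin φ|) - |t|) / (δx * |Real.cos φ * Real.sin φ|)
    else if |t| < δx / 2 * |(|Real.cos φ| - |Real.sin φ|)| then
      1 / max |Real.cos φ| |Real.sin φ|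
    else if (φ = 0 ∨ φ = Real.pi / 2) ∧ |t| = δx / 2 * (|Real.cos φ| + |Real.sin φ|) then
      1 / 2
    else 0)

/-- The pixel-driven weight function `w^pd(t)` (for detector resolution `δs`). -/
noncomputable def pixelWeight (δs t : ℝ) : ℝ := (1 / δs ^ 2) * max (δs - |t|) 0

/-- Spatial pixel center `x_ij` for an `Nx × Nx` grid on `[-1,1]²` (so `δ_x = 2/Nx`). -/
noncomputable def xc (Nx : ℕ) (i j : Fin Nx) : ℝ × ℝ :=
  (((i : ℝ) + 1 / 2) * (2 / (Nx : ℝ)) - 1, ((j : ℝ) + 1 / 2) * (2 / (Nx : ℝ)) - 1)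

/-- Spatial pixel `X_ij = x_ij + [-δ_x/2, δ_x/2]²`. -/
noncomputable def Xpix (Nx : ℕ) (i j : Fin Nx) : Set (ℝ × ℝ) :=
  {y | |y.1 - (xc Nx i j).1| ≤ (2 / (Nx : ℝ)) / 2 ∧ |y.2 - (xc Nx i j).2| ≤ (2 / (Nx : ℝ)) / 2}

/-- Detector pixel center `s_p = (p + 1/2) δ_s - 1` with `δ_s = 2/Ns`. -/
noncomputable def sc (Ns p : ℕ) : ℝ := ((p : ℝ) + 1 / 2) * (2 / (Ns : ℝ)) - 1

/-- Detector pixel `S_p = [s_p - δ_s/2, s_p + δ_s/2)`. -/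
noncomputable def Spix (Ns : ℕ) (p : Fin Ns) : Set ℝ :=
  Set.Ico (sc Ns p - (2 / (Ns : ℝ)) / 2) (sc Ns p + (2 / (Ns : ℝ)) / 2)

/-- The successor angle `φ_{q+1}`, with the convention `φ_{N_φ} = φ_0 + π`. -/
noncomputable def angNext {Nφ : ℕ} (ang : Fin Nφ → ℝ) (q : Fin Nφ) : ℝ :=
  if h : (q : ℕ) + 1 < Nφ then ang ⟨(q : ℕ) + 1, h⟩ else ang ⟨0, q.pos⟩ + Real.pi

/-- The predecessor angle `φ_{q-1}`, with the convention `φ_{-1} = φ_{N_φ-1} - π`. -/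
noncomputable def angPrev {Nφ : ℕ} (ang : Fin Nφ → ℝ) (q : Fin Nφ) : ℝ :=
  if (q : ℕ) = 0 then ang ⟨Nφ - 1, Nat.sub_lt q.pos Nat.one_pos⟩ - Real.pi
  else ang ⟨(q : ℕ) - 1, lt_of_le_of_lt (Nat.sub_le _ _) q.isLt⟩

/-- Left endpoint `(φ_{q-1} + φ_q)/2` of the angular pixel `Φ_q`. -/
noncomputable def phiLo {Nφ : ℕ} (ang : Fin Nφ → ℝ) (q : Fin Nφ) : ℝ :=
  (angPrev ang q + ang q) / 2

/-- Right endpoint `(φ_q + φ_{q+1})/2` of the angular pixel `Φ_q`. -/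
noncomputable def phiHi {Nφ : ℕ} (ang : Fin Nφ → ℝ) (q : Fin Nφ) : ℝ :=
  (ang q + angNext ang q) / 2

/-- The length `|Φ_q|` of the angular pixel `Φ_q`. -/
noncomputable def phiLen {Nφ : ℕ} (ang : Fin Nφ → ℝ) (q : Fin Nφ) : ℝ :=
  phiHi ang q - phiLo ang q

/-- The angular pixel `Φ_q = [(φ_{q-1}+φ_q)/2, (φ_q+φ_{q+1})/2)`, π-periodically
projected into `[0, π)`. -/
noncomputable def PhiSet {Nφ : ℕ} (ang : Fin Nφ → ℝ) (q : Fin Nφ) : Set ℝ :=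
  {φ | φ ∈ Set.Ico 0 Real.pi ∧
    ∃ k : ℤ, φ + (k : ℝ) * Real.pi ∈ Set.Ico (phiLo ang q) (phiHi ang q)}

/-- `x · θ_φ`, the projection of the point `x` onto the detector direction `θ_φ`. -/
noncomputable def proj (x : ℝ × ℝ) (φ : ℝ) : ℝ := x.1 * Real.cos φ + x.2 * Real.sin φ

/-- The spatial domain `Ω = B(0,1) ⊂ ℝ²`. -/
noncomputable def Omg : Set (ℝ × ℝ) := {x | x.1 ^ 2 + x.2 ^ 2 < 1}

/-- The sinogram domain `S = [0, π) × (-1, 1)`, with coordinates `(φ, s)`. -/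
noncomputable def Sdom : Set (ℝ × ℝ) := Set.Ico 0 Real.pi ×ˢ Set.Ioo (-1 : ℝ) 1

/-- The convolutional Radon transform `R_ω` with weight function `ω`. -/
noncomputable def convRadon (Nx Ns : ℕ) {Nφ : ℕ} (ang : Fin Nφ → ℝ)
    (ω : ℝ → ℝ → ℝ) (f : ℝ × ℝ → ℝ) (y : ℝ × ℝ) : ℝ :=
  ∑ q : Fin Nφ, ∑ p : Fin Ns,
    Set.indicator (PhiSet ang q ×ˢ Spix Ns p) (fun _ => (1 : ℝ)) y *
      ∑ i : Fin Nx, ∑ j : Fin Nx,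
        ω (ang q) (proj (xc Nx i j) (ang q) - sc Ns (p : ℕ)) * ∫ x in Xpix Nx i j, f x

/-- The convolutional backprojection `R_ω^*` with weight function `ω`. -/
noncomputable def convBack (Nx Ns : ℕ) {Nφ : ℕ} (ang : Fin Nφ → ℝ)
    (ω : ℝ → ℝ → ℝ) (g : ℝ × ℝ → ℝ) (x : ℝ × ℝ) : ℝ :=
  ∑ i : Fin Nx, ∑ j : Fin Nx,
    Set.indicator (Xpix Nx i j) (fun _ => (1 : ℝ)) x *
      ∑ q : Fin Nφ, ∑ p : Fin Ns,
        ω (ang q) (proj (xc Nx i j) (ang q) - sc Ns (p : ℕ)) *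
          ∫ z in PhiSet ang q ×ˢ Spix Ns p, g z

/-- The Radon transform `(Rf)(φ,s) = ∫ f(s θ_φ + t θ_φ^⊥) dt`, as a function of
`y = (φ, s)`. -/
noncomputable def radonT (f : ℝ × ℝ → ℝ) (y : ℝ × ℝ) : ℝ :=
  ∫ t : ℝ, f (y.2 * Real.cos y.1 - t * Real.sin y.1, y.2 * Real.sin y.1 + t * Real.cos y.1)

/-- The backprojection `(R^* g)(x) = ∫₀^π g(φ, x · θ_φ) dφ`. -/
noncomputable def radonAdj (g : ℝ × ℝ → ℝ) (x : ℝ × ℝ) : ℝ :=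
  ∫ φ in (0 : ℝ)..Real.pi, g (φ, proj x φ)


namespace Stmt12Aux

variable {Nφ : ℕ} {ang : Fin Nφ → ℝ}

lemma angPrev_lt (hmono : StrictMono ang) (hang : ∀ q, ang q ∈ Set.Ico 0 Real.pi)
    (q : Fin Nφ) : angPrev ang q < ang q := by
  unfold angPrev
  split_ifs with h
  · have h1 := (hang ⟨Nφ - 1, Nat.sub_lt q.pos Nat.one_pos⟩).2
    have h2 := (hang q).1
    linarith
  · exact hmono (show (⟨(q:ℕ)-1, _⟩ : Fin Nφ) < q from by
      simp only [Fin.lt_def]; omega)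

lemma lt_angNext (hmono : StrictMono ang) (hang : ∀ q, ang q ∈ Set.Ico 0 Real.pi)
    (q : Fin Nφ) : ang q < angNext ang q := by
  unfold angNext
  split_ifs with h
  · exact hmono (show q < (⟨(q:ℕ)+1, h⟩ : Fin Nφ) from by simp only [Fin.lt_def]; omega)
  · have h1 := (hang q).2
    have h2 := (hang ⟨0, q.pos⟩).1
    linarith

lemma angNext_le (hmono : StrictMono ang) (hang : ∀ q, ang q ∈ Set.Ico 0 Real.pi)
    (q : Fin Nφ) : angNext ang q ≤ ang ⟨0, q.pos⟩ + Real.pi := by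
  unfold angNext
  split_ifs with h
  · have h1 := (hang ⟨(q:ℕ)+1, h⟩).2
    have h2 := (hang ⟨0, q.pos⟩).1
    linarith
  · exact le_refl _

lemma le_angPrev (hmono : StrictMono ang) (hang : ∀ q, ang q ∈ Set.Ico 0 Real.pi)
    (q : Fin Nφ) : ang ⟨0, q.pos⟩ - Real.pi ≤ angPrev ang q := by
  unfold angPrev
  split_ifs with h
  · have : ang ⟨0, q.pos⟩ ≤ ang ⟨Nφ - 1, Nat.sub_lt q.pos Nat.one_pos⟩ :=
      hmono.monotone (by simp only [Fin.le_def]; omega)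
    linarith
  · have h1 := (hang ⟨(q:ℕ)-1, lt_of_le_of_lt (Nat.sub_le _ _) q.isLt⟩).1
    have h2 := (hang ⟨0, q.pos⟩).2
    linarith

lemma lo_lt_hi (hmono : StrictMono ang) (hang : ∀ q, ang q ∈ Set.Ico 0 Real.pi)
    (q : Fin Nφ) : phiLo ang q < phiHi ang q := by
  have h1 := angPrev_lt hmono hang q
  have h2 := lt_angNext hmono hang q
  unfold phiLo phiHi; linarith

lemma len_pos (hmono : StrictMono ang) (hang : ∀ q, ang q ∈ Set.Ico 0 Real.pi)
    (q : Fin Nφ) : 0 < phiLen ang q := by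
  have := lo_lt_hi hmono hang q
  unfold phiLen; linarith

lemma len_le_pi (hmono : StrictMono ang) (hang : ∀ q, ang q ∈ Set.Ico 0 Real.pi)
    (q : Fin Nφ) : phiLen ang q ≤ Real.pi := by
  have h1 := angNext_le hmono hang q
  have h2 := le_angPrev hmono hang q
  unfold phiLen phiLo phiHi; linarith

lemma lo_lt_pi (hmono : StrictMono ang) (hang : ∀ q, ang q ∈ Set.Ico 0 Real.pi)
    (q : Fin Nφ) : phiLo ang q < Real.pi := by
  have h1 := angPrev_lt hmono hang q
  have h2 := (hang q).2
  unfold phiLo; linarith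

lemma hi_pos (hmono : StrictMono ang) (hang : ∀ q, ang q ∈ Set.Ico 0 Real.pi)
    (q : Fin Nφ) : 0 < phiHi ang q := by
  have h1 := lt_angNext hmono hang q
  have h2 := (hang q).1
  unfold phiHi; linarith


lemma phiSet_repr (hmono : StrictMono ang) (hang : ∀ q, ang q ∈ Set.Ico 0 Real.pi)
    (q : Fin Nφ) :
    PhiSet ang q =
      (Set.Ico (max (phiLo ang q) 0) (min (phiHi ang q) Real.pi)
        ∪ Set.Ico (phiLo ang q + Real.pi) Real.pi)
        ∪ Set.Ico 0 (phiHi ang q - Real.pi) := by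
  have hlh := lo_lt_hi hmono hang q
  have hlen := len_le_pi hmono hang q
  have hlopi := lo_lt_pi hmono hang q
  have hhip := hi_pos hmono hang q
  have hπ := Real.pi_pos
  set lo := phiLo ang q with hlo
  set hi := phiHi ang q with hhi
  have hlen' : hi - lo ≤ Real.pi := by unfold phiLen at hlen; linarith
  ext φ
  simp only [PhiSet, Set.mem_setOf_eq, Set.mem_Ico, Set.mem_union]
  constructor
  · rintro ⟨⟨h0, h1⟩, k, a1, a2⟩
    have b1 : (k:ℝ) * Real.pi < 2 * Real.pi := by linarith
    have b2 : (-2:ℝ) * Real.pi < (k:ℝ) * Real.pi := by linarith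
    have c1 : (k:ℝ) < 2 := lt_of_mul_lt_mul_right b1 hπ.le
    have c2 : (-2:ℝ) < (k:ℝ) := lt_of_mul_lt_mul_right b2 hπ.le
    have d1 : k < 2 := by exact_mod_cast c1
    have d2 : -2 < k := by exact_mod_cast c2
    have hk : k = -1 ∨ k = 0 ∨ k = 1 := by omega
    rcases hk with hk | hk | hk
    · subst hk
      push_cast at a1 a2
      left; right
      constructor <;> linarith
    · subst hk
      push_cast at a1 a2
      left; left
      exact ⟨max_le (by linarith) h0, lt_min (by linarith) h1⟩
    · subst hk
      push_cast at a1 a2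
      right
      constructor <;> linarith
  · rintro ((⟨h0, h1⟩ | ⟨h0, h1⟩) | ⟨h0, h1⟩)
    · have e0 : 0 ≤ φ := le_trans (le_max_right _ _) h0
      have e1 : φ < Real.pi := lt_of_lt_of_le h1 (min_le_right _ _)
      refine ⟨⟨e0, e1⟩, 0, ?_, ?_⟩ <;> push_cast
      · have := le_trans (le_max_left _ _) h0; linarith
      · have := lt_of_lt_of_le h1 (min_le_left _ _); linarith
    · refine ⟨⟨by linarith, h1⟩, -1, ?_, ?_⟩ <;> push_cast <;> linarith
    · refine ⟨⟨h0, by linarith⟩, 1, ?_, ?_⟩ <;> push_cast <;> linarith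

lemma measurableSet_phiSet (hmono : StrictMono ang) (hang : ∀ q, ang q ∈ Set.Ico 0 Real.pi)
    (q : Fin Nφ) : MeasurableSet (PhiSet ang q) := by
  rw [phiSet_repr hmono hang q]
  exact ((measurableSet_Ico.union measurableSet_Ico).union measurableSet_Ico)

lemma volume_phiSet (hmono : StrictMono ang) (hang : ∀ q, ang q ∈ Set.Ico 0 Real.pi)
    (q : Fin Nφ) : MeasureTheory.volume (PhiSet ang q) = ENNReal.ofReal (phiLen ang q) := by
  have hlh := lo_lt_hi hmono hang q
  have hlen := len_le_pi hmono hang q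
  have hlopi := lo_lt_pi hmono hang q
  have hhip := hi_pos hmono hang q
  have hπ := Real.pi_pos
  rw [phiSet_repr hmono hang q]
  set lo := phiLo ang q with hlo
  set hi := phiHi ang q with hhi
  have hlen' : hi - lo ≤ Real.pi := by unfold phiLen at hlen; linarith
  have dAB : Disjoint (Set.Ico (max lo 0) (min hi Real.pi)) (Set.Ico (lo + Real.pi) Real.pi) := by
    rw [Set.disjoint_left]
    rintro x ⟨hx1, hx2⟩ ⟨hy1, hy2⟩
    have h := lt_of_lt_of_le hx2 (min_le_left hi Real.pi)
    linarith
  have dC : Disjoint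
      (Set.Ico (max lo 0) (min hi Real.pi) ∪ Set.Ico (lo + Real.pi) Real.pi)
      (Set.Ico 0 (hi - Real.pi)) := by
    rw [Set.disjoint_left]
    rintro x (⟨hx1, hx2⟩ | ⟨hx1, hx2⟩) ⟨hy1, hy2⟩
    · have h := le_trans (le_max_left lo 0) hx1
      linarith
    · linarith
  rw [MeasureTheory.measure_union dC measurableSet_Ico,
    MeasureTheory.measure_union dAB measurableSet_Ico]
  · rw [Real.volume_Ico, Real.volume_Ico, Real.volume_Ico, sub_zero]
    have hplen : phiLen ang q = hi - lo := by unfold phiLen; rw [← hlo, ← hhi]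
    rw [hplen]
    rcases le_or_gt 0 lo with h1 | h1
    · rcases le_or_gt hi Real.pi with h2 | h2
      · rw [max_eq_left h1, min_eq_left h2,
          show Real.pi - (lo + Real.pi) = -lo by ring,
          ENNReal.ofReal_of_nonpos (neg_nonpos.mpr h1),
          ENNReal.ofReal_of_nonpos (by linarith : hi - Real.pi ≤ 0)]
        simp
      · rw [max_eq_left h1, min_eq_right h2.le,
          show Real.pi - (lo + Real.pi) = -lo by ring,
          ENNReal.ofReal_of_nonpos (neg_nonpos.mpr h1), add_zero,
          ← ENNReal.ofReal_add (by linarith : (0:ℝ) ≤ Real.pi - lo)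
            (by linarith : (0:ℝ) ≤ hi - Real.pi)]
        congr 1; ring
    · rw [max_eq_right h1.le, min_eq_left (by linarith : hi ≤ Real.pi),
        ENNReal.ofReal_of_nonpos (by linarith : hi - Real.pi ≤ 0), add_zero,
        show Real.pi - (lo + Real.pi) = -lo by ring,
        ← ENNReal.ofReal_add (by linarith : (0:ℝ) ≤ hi - 0)
          (by linarith : (0:ℝ) ≤ -lo)]
      congr 1; ring


lemma phiLo_mono (hmono : StrictMono ang) (hang : ∀ q, ang q ∈ Set.Ico 0 Real.pi)
    {q q' : Fin Nφ} (h : q ≤ q') : phiLo ang q ≤ phiLo ang q' := by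
  unfold phiLo angPrev
  by_cases h0 : (q:ℕ) = 0
  · by_cases h0' : (q':ℕ) = 0
    · rw [if_pos h0, if_pos h0']
      have := hmono.monotone h
      linarith
    · rw [if_pos h0, if_neg h0']
      have e1 := (hang ⟨Nφ - 1, Nat.sub_lt q.pos Nat.one_pos⟩).2
      have e2 := (hang ⟨(q':ℕ) - 1, lt_of_le_of_lt (Nat.sub_le _ _) q'.isLt⟩).1
      have e3 : ang q ≤ ang q' := hmono.monotone h
      linarith
  · have h0' : ¬ (q':ℕ) = 0 := by
      have : (q:ℕ) ≤ (q':ℕ) := h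
      omega
    rw [if_neg h0, if_neg h0']
    have e1 : ang ⟨(q:ℕ) - 1, lt_of_le_of_lt (Nat.sub_le _ _) q.isLt⟩ ≤
        ang ⟨(q':ℕ) - 1, lt_of_le_of_lt (Nat.sub_le _ _) q'.isLt⟩ := by
      apply hmono.monotone
      simp only [Fin.le_def]
      have : (q:ℕ) ≤ (q':ℕ) := h
      omega
    have e2 : ang q ≤ ang q' := hmono.monotone h
    linarith

lemma phiHi_eq_succ (q : Fin Nφ) (h : (q:ℕ) + 1 < Nφ) :
    phiHi ang q = phiLo ang ⟨(q:ℕ) + 1, h⟩ := by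
  unfold phiHi phiLo angNext angPrev
  rw [dif_pos h, if_neg (by simp)]
  have e : (⟨(((⟨(q:ℕ)+1, h⟩ : Fin Nφ)):ℕ) - 1,
      lt_of_le_of_lt (Nat.sub_le _ _) (⟨(q:ℕ)+1, h⟩ : Fin Nφ).isLt⟩ : Fin Nφ) = q := by
    apply Fin.ext; simp
  rw [e]
  all_goals ring

lemma phiHi_le_phiLo (hmono : StrictMono ang) (hang : ∀ q, ang q ∈ Set.Ico 0 Real.pi)
    {q q' : Fin Nφ} (h : q < q') : phiHi ang q ≤ phiLo ang q' := by
  have h1 : (q:ℕ) + 1 < Nφ := lt_of_le_of_lt h q'.isLt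
  rw [phiHi_eq_succ q h1]
  exact phiLo_mono hmono hang (by simp only [Fin.le_def]; exact h)

lemma phiLo_zero_le (hmono : StrictMono ang) (hang : ∀ q, ang q ∈ Set.Ico 0 Real.pi)
    (q : Fin Nφ) : phiLo ang ⟨0, q.pos⟩ ≤ phiLo ang q :=
  phiLo_mono hmono hang (by simp only [Fin.le_def]; omega)

lemma phiHi_le_window (hmono : StrictMono ang) (hang : ∀ q, ang q ∈ Set.Ico 0 Real.pi)
    (q : Fin Nφ) : phiHi ang q ≤ phiLo ang ⟨0, q.pos⟩ + Real.pi := by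
  have hlast : phiHi ang ⟨Nφ - 1, Nat.sub_lt q.pos Nat.one_pos⟩ =
      phiLo ang ⟨0, q.pos⟩ + Real.pi := by
    unfold phiHi phiLo angNext angPrev
    rw [dif_neg (by simp; omega), if_pos rfl]
    have e : (⟨0, (⟨Nφ - 1, Nat.sub_lt q.pos Nat.one_pos⟩ : Fin Nφ).pos⟩ : Fin Nφ)
        = ⟨0, q.pos⟩ := rfl
    rw [e]; ring
  rcases lt_or_eq_of_le (show (q:ℕ) ≤ Nφ - 1 by omega) with h | h
  · have h1 : (q:ℕ) + 1 < Nφ := by omega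
    rw [phiHi_eq_succ q h1]
    have s1 : phiLo ang ⟨(q:ℕ)+1, h1⟩ ≤ phiLo ang ⟨Nφ - 1, Nat.sub_lt q.pos Nat.one_pos⟩ :=
      phiLo_mono hmono hang (by simp only [Fin.le_def]; omega)
    have s2 := lo_lt_hi hmono hang (⟨Nφ - 1, Nat.sub_lt q.pos Nat.one_pos⟩ : Fin Nφ)
    linarith [hlast]
  · have e : q = ⟨Nφ - 1, Nat.sub_lt q.pos Nat.one_pos⟩ := Fin.ext h
    rw [e, hlast]

lemma phiSet_disjoint (hmono : StrictMono ang) (hang : ∀ q, ang q ∈ Set.Ico 0 Real.pi)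
    {q q' : Fin Nφ} (h : q ≠ q') : PhiSet ang q ∩ PhiSet ang q' = ∅ := by
  have key : ∀ a b : Fin Nφ, a < b → PhiSet ang a ∩ PhiSet ang b = ∅ := by
    intro a b hab
    ext φ
    simp only [Set.mem_inter_iff, Set.mem_empty_iff_false, iff_false]
    rintro ⟨⟨_, k, a1, a2⟩, ⟨_, k', b1, b2⟩⟩
    have hπ := Real.pi_pos
    have w1 : phiLo ang ⟨0, a.pos⟩ ≤ phiLo ang a := phiLo_zero_le hmono hang a
    have w2 : phiHi ang a ≤ phiLo ang ⟨0, a.pos⟩ + Real.pi := phiHi_le_window hmono hang a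
    have w1' : phiLo ang ⟨0, a.pos⟩ ≤ phiLo ang b := by
      have := phiLo_zero_le hmono hang b
      have e : (⟨0, b.pos⟩ : Fin Nφ) = ⟨0, a.pos⟩ := rfl
      rw [e] at this; exact this
    have w2' : phiHi ang b ≤ phiLo ang ⟨0, a.pos⟩ + Real.pi := by
      have := phiHi_le_window hmono hang b
      have e : (⟨0, b.pos⟩ : Fin Nφ) = ⟨0, a.pos⟩ := rfl
      rw [e] at this; exact this
    have hkk : k = k' := by
      have c1 : ((k - k' : ℤ) : ℝ) * Real.pi < 1 * Real.pi := by push_cast; nlinarith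
      have c2 : (-1 : ℝ) * Real.pi < ((k - k' : ℤ) : ℝ) * Real.pi := by push_cast; nlinarith
      have d1 : ((k - k' : ℤ) : ℝ) < 1 := lt_of_mul_lt_mul_right c1 hπ.le
      have d2 : (-1 : ℝ) < ((k - k' : ℤ) : ℝ) := lt_of_mul_lt_mul_right c2 hπ.le
      have d1' : (k - k' : ℤ) < 1 := by exact_mod_cast d1
      have d2' : (-1 : ℤ) < k - k' := by exact_mod_cast d2
      omega
    subst hkk
    have hsep : phiHi ang a ≤ phiLo ang b := phiHi_le_phiLo hmono hang hab
    linarith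
  rcases lt_or_gt_of_ne h with h' | h'
  · exact key q q' h'
  · rw [Set.inter_comm]; exact key q' q h'


lemma volume_Spix_inter {Ns : ℕ} (hNs : 0 < Ns) (p : Fin Ns) :
    MeasureTheory.volume (Spix Ns p ∩ Set.Ioo (-1:ℝ) 1) = ENNReal.ofReal (2 / (Ns:ℝ)) := by
  have hδ : (0:ℝ) < 2 / (Ns:ℝ) := by positivity
  set δ : ℝ := 2 / (Ns:ℝ) with hδdef
  have hNsδ : (Ns:ℝ) * δ = 2 := by
    rw [hδdef]; field_simp
  have ha : (-1:ℝ) ≤ sc Ns p - δ / 2 := by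
    unfold sc
    have : (0:ℝ) ≤ (p:ℕ) := Nat.cast_nonneg _
    nlinarith
  have hb : sc Ns p + δ / 2 ≤ 1 := by
    unfold sc
    have : ((p:ℕ):ℝ) + 1 ≤ (Ns:ℝ) := by exact_mod_cast p.isLt
    nlinarith
  apply le_antisymm
  · calc MeasureTheory.volume (Spix Ns p ∩ Set.Ioo (-1:ℝ) 1)
        ≤ MeasureTheory.volume (Spix Ns p) := MeasureTheory.measure_mono Set.inter_subset_left
      _ = ENNReal.ofReal δ := by
          unfold Spix; rw [Real.volume_Ico]; congr 1; ring
  · calc ENNReal.ofReal δ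
        = MeasureTheory.volume (Set.Ioo (sc Ns p - δ/2) (sc Ns p + δ/2)) := by
          rw [Real.volume_Ioo]; congr 1; ring
      _ ≤ MeasureTheory.volume (Spix Ns p ∩ Set.Ioo (-1:ℝ) 1) := by
          apply MeasureTheory.measure_mono
          rintro z ⟨hz1, hz2⟩
          exact ⟨⟨hz1.le, hz2⟩, by constructor <;> [linarith; linarith]⟩

lemma integral_g {Nφ Ns : ℕ} {ang : Fin Nφ → ℝ} (hNs : 0 < Ns)
    (hmono : StrictMono ang) (hang : ∀ q, ang q ∈ Set.Ico 0 Real.pi)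
    (qh q : Fin Nφ) (p : Fin Ns) :
    (∫ z in PhiSet ang q ×ˢ Spix Ns p,
      Set.indicator (PhiSet ang qh ×ˢ Set.Ioo (-1:ℝ) 1) (fun _ => 1 / phiLen ang qh) z)
      = if q = qh then 2 / (Ns:ℝ) else 0 := by
  rw [MeasureTheory.setIntegral_indicator
    ((measurableSet_phiSet hmono hang qh).prod measurableSet_Ioo),
    MeasureTheory.setIntegral_const, Set.prod_inter_prod]
  by_cases hq : q = qh
  · subst hq
    rw [if_pos rfl, Set.inter_self]
    rw [MeasureTheory.Measure.volume_eq_prod, MeasureTheory.measureReal_def, MeasureTheory.Measure.prod_prod,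
      volume_phiSet hmono hang q, volume_Spix_inter hNs p,
      ← ENNReal.ofReal_mul (len_pos hmono hang q).le]
    have hlen := len_pos hmono hang q
    rw [ENNReal.toReal_ofReal (mul_nonneg hlen.le (by positivity))]
    rw [smul_eq_mul]
    field_simp
  · rw [if_neg hq, phiSet_disjoint hmono hang hq]
    simp

lemma hat_sum (Ns : ℕ) (hNs : 0 < Ns) (t : ℝ) (ht : |t| ≤ 1 - (2 / (Ns:ℝ)) / 2) :
    ∑ p : Fin Ns, pixelWeight (2 / (Ns:ℝ)) (t - sc Ns (p:ℕ)) * (2 / (Ns:ℝ)) = 1 := by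
  have hδ : (0:ℝ) < 2 / (Ns:ℝ) := by positivity
  set δ : ℝ := 2 / (Ns:ℝ) with hδdef
  have hNsδ : (Ns:ℝ) * δ = 2 := by rw [hδdef]; field_simp
  set u : ℝ := (t + 1) / δ - 1/2 with hu
  have habs := abs_le.mp ht
  have hu0 : 0 ≤ u := by
    rw [hu, le_sub_iff_add_le, le_div_iff₀ hδ]
    linarith [habs.1]
  have huN : u ≤ (Ns:ℝ) - 1 := by
    rw [hu, sub_le_iff_le_add, div_le_iff₀ hδ]
    nlinarith [habs.2]
  have hterm : ∀ p : Fin Ns, pixelWeight δ (t - sc Ns (p:ℕ)) * δ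
      = max (1 - |u - ((p:ℕ):ℝ)|) 0 := by
    intro p
    have e1 : t - sc Ns (p:ℕ) = δ * (u - ((p:ℕ):ℝ)) := by
      rw [hu]; unfold sc; rw [hδdef]; field_simp; ring
    rw [e1, pixelWeight, abs_mul, abs_of_pos hδ]
    have e2 : δ - δ * |u - ((p:ℕ):ℝ)| = δ * (1 - |u - ((p:ℕ):ℝ)|) := by ring
    have e3 : max (δ * (1 - |u - ((p:ℕ):ℝ)|)) 0 = δ * max (1 - |u - ((p:ℕ):ℝ)|) 0 := by
      rw [mul_max_of_nonneg _ _ hδ.le, mul_zero]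
    rw [e2, e3]
    have hδne : δ ≠ 0 := hδ.ne'
    field_simp
  simp_rw [hterm]
  set f : Fin Ns → ℝ := fun p => max (1 - |u - ((p:ℕ):ℝ)|) 0 with hf
  set n : ℕ := ⌊u⌋₊ with hn
  have hn1 : (n:ℝ) ≤ u := Nat.floor_le hu0
  have hn2 : u < (n:ℝ) + 1 := Nat.lt_floor_add_one u
  have hnN : n + 1 ≤ Ns := by
    have c1 : (n:ℝ) + 1 ≤ (Ns:ℝ) := by linarith
    exact_mod_cast c1
  have hzero : ∀ p : Fin Ns, (p:ℕ) ≠ n → (p:ℕ) ≠ n + 1 → f p = 0 := by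
    intro p hp1 hp2
    rw [hf]
    apply max_eq_right
    rcases lt_or_gt_of_ne hp1 with hc | hc
    · have : ((p:ℕ):ℝ) + 1 ≤ (n:ℝ) := by exact_mod_cast hc
      have : (1:ℝ) ≤ u - ((p:ℕ):ℝ) := by linarith
      have habs2 : (1:ℝ) ≤ |u - ((p:ℕ):ℝ)| := le_abs.mpr (Or.inl this)
      linarith
    · have hcc : n + 2 ≤ (p:ℕ) := by omega
      have : (n:ℝ) + 2 ≤ ((p:ℕ):ℝ) := by exact_mod_cast hcc
      have : (1:ℝ) ≤ -(u - ((p:ℕ):ℝ)) := by linarith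
      have habs2 : (1:ℝ) ≤ |u - ((p:ℕ):ℝ)| := le_abs.mpr (Or.inr this)
      linarith
  rcases lt_or_eq_of_le hnN with hlt | heq
  · set a : Fin Ns := ⟨n, by omega⟩ with hadef
    set b : Fin Ns := ⟨n + 1, hlt⟩ with hbdef
    have hab : a ≠ b := by
      rw [hadef, hbdef, Fin.ne_iff_vne]; simp
    have hsum : ∑ p : Fin Ns, f p = f a + f b := by
      rw [← Finset.sum_pair hab]
      apply (Finset.sum_subset (Finset.subset_univ _) _).symm
      intro p _ hp
      simp only [Finset.mem_insert, Finset.mem_singleton] at hp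
      push_neg at hp
      apply hzero
      · intro hc; exact hp.1 (Fin.ext (by rw [hc]))
      · intro hc; exact hp.2 (Fin.ext (by rw [hc]))
    rw [hsum]
    have fa : f a = 1 - (u - (n:ℝ)) := by
      rw [hf]; simp only [hadef, Fin.val_mk]
      rw [abs_of_nonneg (by linarith : (0:ℝ) ≤ u - ((n:ℕ):ℝ))]
      exact max_eq_left (by linarith)
    have fb : f b = u - (n:ℝ) := by
      rw [hf]; simp only [hbdef, Fin.val_mk]
      rw [show ((n+1:ℕ):ℝ) = (n:ℝ)+1 by push_cast; ring]
      rw [abs_of_nonpos (by linarith : u - ((n:ℝ)+1) ≤ 0)]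
      rw [max_eq_left (by linarith : (0:ℝ) ≤ 1 - -(u - ((n:ℝ)+1)))]
      ring
    rw [fa, fb]; ring
  · -- u = n = Ns - 1
    have hun : u = (n:ℝ) := by
      have : ((n:ℝ)) = (Ns:ℝ) - 1 := by
        have : (Ns:ℝ) = (n:ℝ) + 1 := by exact_mod_cast heq.symm
        linarith
      linarith [this ▸ huN]
    set a : Fin Ns := ⟨n, by omega⟩ with hadef
    rw [Finset.sum_eq_single_of_mem a (Finset.mem_univ a)]
    · simp only [hadef, Fin.val_mk, hun]
      simp
    · intro p _ hp
      apply hzero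
      · intro hc; exact hp (Fin.ext hc)
      · have := p.isLt; omega

lemma Xpix_eq (Nx : ℕ) (i j : Fin Nx) :
    Xpix Nx i j = Set.Icc ((xc Nx i j).1 - (2/(Nx:ℝ))/2) ((xc Nx i j).1 + (2/(Nx:ℝ))/2) ×ˢ
      Set.Icc ((xc Nx i j).2 - (2/(Nx:ℝ))/2) ((xc Nx i j).2 + (2/(Nx:ℝ))/2) := by
  ext y
  simp only [Xpix, Set.mem_setOf_eq, abs_le, Set.mem_prod, Set.mem_Icc]
  constructor
  · rintro ⟨⟨a1, a2⟩, b1, b2⟩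
    exact ⟨⟨by linarith, by linarith⟩, ⟨by linarith, by linarith⟩⟩
  · rintro ⟨⟨a1, a2⟩, b1, b2⟩
    exact ⟨⟨by linarith, by linarith⟩, ⟨by linarith, by linarith⟩⟩

lemma interior_Xpix (Nx : ℕ) (i j : Fin Nx) :
    interior (Xpix Nx i j) =
      Set.Ioo ((xc Nx i j).1 - (2/(Nx:ℝ))/2) ((xc Nx i j).1 + (2/(Nx:ℝ))/2) ×ˢ
      Set.Ioo ((xc Nx i j).2 - (2/(Nx:ℝ))/2) ((xc Nx i j).2 + (2/(Nx:ℝ))/2) := by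
  rw [Xpix_eq, interior_prod_eq, interior_Icc, interior_Icc]

lemma coord_sep (Nx : ℕ) (a b : Fin Nx) (h : a ≠ b) (z : ℝ)
    (hz : |z - (((a:ℕ):ℝ) + 1/2) * (2/(Nx:ℝ)) + 1| < (2/(Nx:ℝ))/2) :
    ¬ |z - (((b:ℕ):ℝ) + 1/2) * (2/(Nx:ℝ)) + 1| ≤ (2/(Nx:ℝ))/2 := by
  intro hc
  have hNx : 0 < Nx := a.pos
  have hδ : (0:ℝ) < 2/(Nx:ℝ) := by positivity
  set δ : ℝ := 2/(Nx:ℝ) with hδdef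
  have hne : (a:ℕ) ≠ (b:ℕ) := fun hh => h (Fin.ext hh)
  have h1 : (1:ℝ) ≤ |((a:ℕ):ℝ) - ((b:ℕ):ℝ)| := by
    rcases lt_or_gt_of_ne hne with hh | hh
    · have h2 : ((a:ℕ):ℝ) + 1 ≤ ((b:ℕ):ℝ) := by exact_mod_cast hh
      rw [abs_sub_comm, abs_of_nonneg (by linarith)]
      linarith
    · have h2 : ((b:ℕ):ℝ) + 1 ≤ ((a:ℕ):ℝ) := by exact_mod_cast hh
      rw [abs_of_nonneg (by linarith)]
      linarith
  have e : (z - (((a:ℕ):ℝ) + 1/2) * δ + 1) - (z - (((b:ℕ):ℝ) + 1/2) * δ + 1)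
      = (((b:ℕ):ℝ) - ((a:ℕ):ℝ)) * δ := by ring
  have key : δ ≤ |(z - (((a:ℕ):ℝ) + 1/2) * δ + 1) - (z - (((b:ℕ):ℝ) + 1/2) * δ + 1)| := by
    rw [e, abs_mul, abs_of_pos hδ, abs_sub_comm]
    nlinarith
  have tri2 : |(z - (((a:ℕ):ℝ) + 1/2) * δ + 1) - (z - (((b:ℕ):ℝ) + 1/2) * δ + 1)|
      ≤ |z - (((a:ℕ):ℝ) + 1/2) * δ + 1| + |z - (((b:ℕ):ℝ) + 1/2) * δ + 1| := by
    have h3 := abs_sub_le (z - (((a:ℕ):ℝ) + 1/2) * δ + 1) 0 (z - (((b:ℕ):ℝ) + 1/2) * δ + 1)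
    simp only [sub_zero, zero_sub, abs_neg] at h3
    linarith
  linarith

end Stmt12Aux




/-- For a fixed discretization, fix `qh ∈ {0,…,N_φ-1}` and let
`g_qh(φ,s) = 1/|Φ_qh|` for `φ ∈ Φ_qh`, `s ∈ (-1,1)`, and `0` otherwise. Then
`(R^* g_qh)(x) = 1` for all `x ∈ Ω`, and for every `i, j` with
`|x_ij · θ_qh| ≤ 1 - δ_s/2` and every `x` in the interior of `X_ij`, the pixel-driven
backprojection is exact: `(R^pd* g_qh)(x) = 1`. -/
theorem stmt12 (Nx Nφ Ns : ℕ) (hNx : 0 < Nx) (hNφ : 0 < Nφ) (hNs : 0 < Ns)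
    (ang : Fin Nφ → ℝ) (hmono : StrictMono ang) (hang : ∀ q, ang q ∈ Set.Ico 0 Real.pi)
    (qh : Fin Nφ) (g : ℝ × ℝ → ℝ)
    (hg : g = fun y => Set.indicator (PhiSet ang qh ×ˢ Set.Ioo (-1 : ℝ) 1)
      (fun _ => 1 / phiLen ang qh) y) :
    (∀ x ∈ Omg, radonAdj g x = 1)
    ∧ (∀ i j : Fin Nx, |proj (xc Nx i j) (ang qh)| ≤ 1 - (2 / (Ns : ℝ)) / 2 →
        ∀ x ∈ interior (Xpix Nx i j),
          convBack Nx Ns ang (fun _ t => pixelWeight (2 / (Ns : ℝ)) t) g x = 1) := by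
  subst hg
  constructor
  · -- Part 1: exact backprojection
    intro x hx
    have hOmg : x.1 ^ 2 + x.2 ^ 2 < 1 := hx
    have hproj : ∀ φ : ℝ, |proj x φ| < 1 := by
      intro φ
      have h1 : (proj x φ) ^ 2 < 1 := by
        have hs := Real.sin_sq_add_cos_sq φ
        unfold proj
        nlinarith [sq_nonneg (x.1 * Real.sin φ - x.2 * Real.cos φ)]
      nlinarith [sq_abs (proj x φ), abs_nonneg (proj x φ)]
    have hgφ : ∀ φ : ℝ,
        Set.indicator (PhiSet ang qh ×ˢ Set.Ioo (-1 : ℝ) 1)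
          (fun _ => 1 / phiLen ang qh) (φ, proj x φ)
        = Set.indicator (PhiSet ang qh) (fun _ => 1 / phiLen ang qh) φ := by
      intro φ
      by_cases hφ : φ ∈ PhiSet ang qh
      · rw [Set.indicator_of_mem hφ, Set.indicator_of_mem]
        exact Set.mk_mem_prod hφ (by simpa [Set.mem_Ioo] using abs_lt.mp (hproj φ))
      · rw [Set.indicator_of_notMem hφ, Set.indicator_of_notMem]
        intro hc
        exact hφ hc.1
    unfold radonAdj
    simp only [hgφ]
    rw [intervalIntegral.integral_of_le Real.pi_pos.le,
      MeasureTheory.setIntegral_indicator (Stmt12Aux.measurableSet_phiSet hmono hang qh),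
      MeasureTheory.setIntegral_const]
    have hvol : MeasureTheory.volume (Set.Ioc 0 Real.pi ∩ PhiSet ang qh)
        = ENNReal.ofReal (phiLen ang qh) := by
      rw [← Stmt12Aux.volume_phiSet hmono hang qh]
      apply le_antisymm
      · exact MeasureTheory.measure_mono Set.inter_subset_right
      · calc MeasureTheory.volume (PhiSet ang qh)
            = MeasureTheory.volume (PhiSet ang qh \ {0}) :=
              (MeasureTheory.measure_diff_null (MeasureTheory.measure_singleton 0)).symm
          _ ≤ MeasureTheory.volume (Set.Ioc 0 Real.pi ∩ PhiSet ang qh) := by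
              apply MeasureTheory.measure_mono
              rintro φ ⟨hφ, h0⟩
              have h0' : φ ≠ 0 := by simpa using h0
              exact ⟨⟨lt_of_le_of_ne hφ.1.1 (Ne.symm h0'), hφ.1.2.le⟩, hφ⟩
    rw [MeasureTheory.measureReal_def, hvol, ENNReal.toReal_ofReal (Stmt12Aux.len_pos hmono hang qh).le, smul_eq_mul]
    have hlen := Stmt12Aux.len_pos hmono hang qh
    field_simp
  · -- Part 2: pixel-driven backprojection is exact
    intro i j hij x hx
    have hδx : (0:ℝ) < 2 / (Nx:ℝ) := by positivity
    rw [Stmt12Aux.interior_Xpix Nx i j] at hx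
    obtain ⟨hx1, hx2⟩ := hx
    rw [Set.mem_Ioo] at hx1 hx2
    have hx1' : |x.1 - (xc Nx i j).1| < (2 / (Nx:ℝ)) / 2 := by
      rw [abs_lt]; constructor <;> linarith [hx1.1, hx1.2]
    have hx2' : |x.2 - (xc Nx i j).2| < (2 / (Nx:ℝ)) / 2 := by
      rw [abs_lt]; constructor <;> linarith [hx2.1, hx2.2]
    have hmem : x ∈ Xpix Nx i j := ⟨hx1'.le, hx2'.le⟩
    have hnotmem : ∀ i' j' : Fin Nx, (i' ≠ i ∨ j' ≠ j) → x ∉ Xpix Nx i' j' := by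
      rintro i' j' (hne | hne) ⟨hc1, hc2⟩
      · exact Stmt12Aux.coord_sep Nx i i' hne.symm x.1
          (by rw [show x.1 - (((i:ℕ):ℝ) + 1/2) * (2/(Nx:ℝ)) + 1
                = x.1 - (xc Nx i j).1 by unfold xc; ring] ; exact hx1')
          (by rw [show x.1 - (((i':ℕ):ℝ) + 1/2) * (2/(Nx:ℝ)) + 1
                = x.1 - (xc Nx i' j').1 by unfold xc; ring]; exact hc1)
      · exact Stmt12Aux.coord_sep Nx j j' hne.symm x.2
          (by rw [show x.2 - (((j:ℕ):ℝ) + 1/2) * (2/(Nx:ℝ)) + 1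
                = x.2 - (xc Nx i j).2 by unfold xc; ring]; exact hx2')
          (by rw [show x.2 - (((j':ℕ):ℝ) + 1/2) * (2/(Nx:ℝ)) + 1
                = x.2 - (xc Nx i' j').2 by unfold xc; ring]; exact hc2)
    unfold convBack
    rw [Finset.sum_eq_single_of_mem i (Finset.mem_univ i)]
    · rw [Finset.sum_eq_single_of_mem j (Finset.mem_univ j)]
      · rw [Set.indicator_of_mem hmem, one_mul]
        have hint : ∀ (q : Fin Nφ) (p : Fin Ns),
            (∫ z in PhiSet ang q ×ˢ Spix Ns p,
              Set.indicator (PhiSet ang qh ×ˢ Set.Ioo (-1:ℝ) 1)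
                (fun _ => 1 / phiLen ang qh) z)
            = if q = qh then 2 / (Ns:ℝ) else 0 :=
          fun q p => Stmt12Aux.integral_g hNs hmono hang qh q p
        simp only [hint]
        rw [Finset.sum_eq_single_of_mem qh (Finset.mem_univ qh)]
        · simp only [if_pos rfl]
          exact Stmt12Aux.hat_sum Ns hNs (proj (xc Nx i j) (ang qh)) hij
        · intro q _ hq
          simp [if_neg hq]
      · intro j' _ hj'
        rw [Set.indicator_of_notMem (hnotmem i j' (Or.inr hj')), zero_mul]
    · intro i' _ hi'
      apply Finset.sum_eq_zero
      intro j' _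
      rw [Set.indicator_of_notMem (hnotmem i' j' (Or.inl hi')), zero_mul]
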